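/- arXiv:1407.5337 — 2 statements merged into one kernel-verified Lean document; each statement's English description precedes it below -/
import Mathlib

section
/- Let D be a bounded operator on ℓ²(ℕ), Λ ⊂ ℕ, and let 𝒲 be a closed subspace of ℓ²(ℕ) with 𝒲 ⊇ Null(P_Λ D). Assume P_Λ D admits a bounded Moore–Penrose pseudoinverse (P_Λ D)†. Then for every z ∈ ℓ²(ℕ) with P_Λ D z ∈ ℓ¹(ℕ), ‖Q^⊥_𝒲 z‖₂ ≤ ‖(P_Λ D)†‖_{1→2} · ‖P_Λ D z‖₁. -/
noncomputable section

open scoped ComplexConjugate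

/-- The Hilbert space `ℓ²(ℕ)` over `ℂ`. -/
abbrev H : Type := lp (fun _ : ℕ => ℂ) 2

/-- The canonical basis vectors of `ℓ²(ℕ)`. -/
def e (n : ℕ) : H := lp.single 2 n 1

/-- The `n`-th coordinate of `v ∈ ℓ²(ℕ)`. -/
def coord (n : ℕ) (v : H) : ℂ := (inner ℂ (e n) v : ℂ)

/-- `Pm` is the family of coordinate (orthogonal) projections: for every `S ⊆ ℕ`,
`Pm S` keeps the coordinates in `S` and sets all others to zero. -/
def IsCoordProj (Pm : Set ℕ → H →L[ℂ] H) : Prop :=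
  ∀ (S : Set ℕ) (v : H),
    (∀ n ∈ S, coord n (Pm S v) = coord n v) ∧ ∀ n ∉ S, coord n (Pm S v) = 0

lemma coord_eq_apply (n : ℕ) (v : H) : coord n v = v n := by
  simp [coord, e, lp.inner_single_left]

/-- Main estimate: for `y` with summable coordinates, `‖G y‖ ≤ (⨆ j, ‖G e j‖) * ∑' ‖y n‖`. -/
lemma G_bound (G : H →L[ℂ] H) (y : H) (hy : Summable fun n => ‖coord n y‖) :
    ‖G y‖ ≤ (⨆ j, ‖G (e j)‖) * ∑' n, ‖coord n y‖ := by
  set C : ℝ := ⨆ j, ‖G (e j)‖ with hC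
  have hbdd : BddAbove (Set.range fun j => ‖G (e j)‖) := by
    refine ⟨‖G‖, ?_⟩
    rintro _ ⟨j, rfl⟩
    calc ‖G (e j)‖ ≤ ‖G‖ * ‖e j‖ := G.le_opNorm _
      _ = ‖G‖ := by
        have h1 : ‖e j‖ = 1 := by
          have := lp.norm_single (p := 2) (E := fun _ : ℕ => ℂ)
            (by norm_num) j (1 : ℂ)
          simpa [e] using this
        rw [h1, mul_one]
  have hCle : ∀ j, ‖G (e j)‖ ≤ C := fun j => le_ciSup hbdd j
  have hC0 : 0 ≤ C := le_trans (norm_nonneg _) (hCle 0)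
  -- y = ∑' n, lp.single 2 n (y n)
  have hsum : HasSum (fun n : ℕ => lp.single 2 n (y n : ℂ)) y :=
    lp.hasSum_single ENNReal.ofNat_ne_top y
  have hsumG : HasSum (fun n : ℕ => G (lp.single 2 n (y n : ℂ))) (G y) :=
    G.hasSum hsum
  have hterm : ∀ n, ‖G (lp.single 2 n (y n : ℂ))‖ ≤ ‖coord n y‖ * C := by
    intro n
    have h1 : lp.single 2 n (y n : ℂ) = (y n : ℂ) • e n := by
      have := lp.single_smul (E := fun _ : ℕ => ℂ) 2 n (y n) (1 : ℂ)
      simpa [e] using this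
    rw [h1, map_smul, norm_smul, coord_eq_apply]
    exact mul_le_mul_of_nonneg_left (hCle n) (norm_nonneg _)
  have hsummable : Summable fun n => ‖G (lp.single 2 n (y n : ℂ))‖ := by
    refine Summable.of_nonneg_of_le (fun n => norm_nonneg _) hterm ?_
    exact hy.mul_right C
  calc ‖G y‖ ≤ ∑' n, ‖G (lp.single 2 n (y n : ℂ))‖ :=
        hsumG.norm_le_of_bounded hsummable.hasSum (fun n => le_rfl)
    _ ≤ ∑' n, ‖coord n y‖ * C := Summable.tsum_le_tsum hterm hsummable (hy.mul_right C)
    _ = C * ∑' n, ‖coord n y‖ := by rw [tsum_mul_right, mul_comm]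

theorem stmt6 (D : H →L[ℂ] H) (Λ : Set ℕ)
    (Pm : Set ℕ → H →L[ℂ] H) (hPm : IsCoordProj Pm)
    (𝒲 : Submodule ℂ H) (h𝒲closed : IsClosed (𝒲 : Set H))
    (hker : ∀ v : H, (Pm Λ).comp D v = 0 → v ∈ 𝒲)
    -- `Q` is the orthogonal projection onto `𝒲`
    (Q : H →L[ℂ] H) (hQmem : ∀ v, Q v ∈ 𝒲) (hQfix : ∀ v ∈ 𝒲, Q v = v)
    (hQsa : ∀ u v : H, (inner ℂ (Q u) v : ℂ) = inner ℂ u (Q v))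
    -- `G` is a Moore–Penrose pseudoinverse of `T = P_Λ D`
    (G : H →L[ℂ] H)
    (hTGT : ((Pm Λ).comp D).comp (G.comp ((Pm Λ).comp D)) = (Pm Λ).comp D)
    (hGTG : G.comp (((Pm Λ).comp D).comp G) = G)
    (hTGsa : ∀ u v : H, (inner ℂ ((Pm Λ).comp D (G u)) v : ℂ) = inner ℂ u ((Pm Λ).comp D (G v)))
    (hGTsa : ∀ u v : H, (inner ℂ (G ((Pm Λ).comp D u)) v : ℂ) = inner ℂ u (G ((Pm Λ).comp D v)))
    (z : H) (hz1 : Summable fun n => ‖coord n ((Pm Λ).comp D z)‖) :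
    ‖z - Q z‖ ≤ (⨆ j, ‖G (e j)‖) * ∑' n, ‖coord n ((Pm Λ).comp D z)‖ := by
  set T : H →L[ℂ] H := (Pm Λ).comp D with hT
  -- the "kernel part" of z
  set w : H := z - G (T z) with hw
  have hwker : T w = 0 := by
    have := congrArg (fun (L : H →L[ℂ] H) => L z) hTGT
    simp only [ContinuousLinearMap.comp_apply] at this
    simp [hw, map_sub, this]
  have hwW : w ∈ 𝒲 := hker w hwker
  -- z - Q z is orthogonal to 𝒲
  have horth : ∀ v ∈ 𝒲, (inner ℂ (z - Q z) v : ℂ) = 0 := by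
    intro v hv
    have h1 : (inner ℂ (Q z) v : ℂ) = inner ℂ z v := by
      rw [hQsa, hQfix v hv]
    rw [inner_sub_left, h1, sub_self]
  -- key: ‖z - Q z‖ ≤ ‖G (T z)‖
  have hkey : ‖z - Q z‖ ≤ ‖G (T z)‖ := by
    have hdecomp : z - Q z = G (T z) + (w - Q z) := by
      rw [hw]; abel
    have hmem : w - Q z ∈ 𝒲 := 𝒲.sub_mem hwW (hQmem z)
    have hinner : (inner ℂ (z - Q z) (z - Q z) : ℂ) = inner ℂ (z - Q z) (G (T z)) := by
      calc (inner ℂ (z - Q z) (z - Q z) : ℂ)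
          = inner ℂ (z - Q z) (G (T z) + (w - Q z)) := by rw [← hdecomp]
        _ = inner ℂ (z - Q z) (G (T z)) + inner ℂ (z - Q z) (w - Q z) := inner_add_right _ _ _
        _ = inner ℂ (z - Q z) (G (T z)) := by rw [horth _ hmem, add_zero]
    have hsq : (‖z - Q z‖ : ℝ) ^ 2 ≤ ‖z - Q z‖ * ‖G (T z)‖ := by
      have : ((‖z - Q z‖ : ℝ) ^ 2 : ℂ) = inner ℂ (z - Q z) (G (T z)) := by
        rw [← hinner, inner_self_eq_norm_sq_to_K]; norm_cast
      calc (‖z - Q z‖ : ℝ) ^ 2 = ‖(inner ℂ (z - Q z) (G (T z)) : ℂ)‖ := by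
            rw [← this, ← Complex.ofReal_pow, Complex.norm_real]
            exact (Real.norm_of_nonneg (by positivity)).symm
        _ ≤ ‖z - Q z‖ * ‖G (T z)‖ := norm_inner_le_norm _ _
    rcases eq_or_lt_of_le (norm_nonneg (z - Q z)) with h0 | h0
    · rw [← h0]; exact norm_nonneg _
    · nlinarith [hsq]
  exact hkey.trans (G_bound G (T z) hz1)

end
end

section
/- Fix N ∈ ℕ and let D : ℂ^N → ℂ^{N−1} be the finite-difference operator (Dx)_j = x_{j+1} − x_j. Let Λ^c = {t_1,…,t_{s−1}} ⊂ {1,…,N−1} with t_1 < ⋯ < t_{s−1}, Λ = {1,…,N−1}∖Λ^c, and let (P_Λ D)† : ℂ^{N−1} → ℂ^N be the Moore–Penrose pseudoinverse of P_Λ D. Then ‖(P_Λ D)†‖_{1→2} ≤ √N; equivalently, every column of (P_Λ D)† has Euclidean norm at most √N. -/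
open scoped ComplexConjugate

/-- Matrix entries of `P_Λ D` (rows `i ∈ {1,…,N-1}`, columns `j ∈ {1,…,N}`):
row `i` is `(…, -1, +1, …)` (with `-1` at column `i`) if `i ∈ Λ`, and zero otherwise. -/
def PLD (Λ : Finset ℕ) (i j : ℕ) : ℂ :=
  if i ∈ Λ then (if j = i + 1 then 1 else if j = i then -1 else 0) else 0

/-- `G : ℂ^{N-1} → ℂ^N` (rows `1,…,N`, columns `1,…,N-1`) is a Moore–Penrose
pseudoinverse of `P_Λ D`:  `TGT = T`, `GTG = G`, and `TG`, `GT` are self-adjoint. -/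
structure IsPseudoInv (N : ℕ) (Λ : Finset ℕ) (G : ℕ → ℕ → ℂ) : Prop where
  tgt : ∀ i ∈ Finset.Icc 1 (N - 1), ∀ j ∈ Finset.Icc 1 N,
    ∑ a ∈ Finset.Icc 1 N, ∑ b ∈ Finset.Icc 1 (N - 1),
      PLD Λ i a * G a b * PLD Λ b j = PLD Λ i j
  gtg : ∀ i ∈ Finset.Icc 1 N, ∀ j ∈ Finset.Icc 1 (N - 1),
    ∑ a ∈ Finset.Icc 1 (N - 1), ∑ b ∈ Finset.Icc 1 N,
      G i a * PLD Λ a b * G b j = G i j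
  tg_sa : ∀ i ∈ Finset.Icc 1 (N - 1), ∀ j ∈ Finset.Icc 1 (N - 1),
    conj (∑ a ∈ Finset.Icc 1 N, PLD Λ j a * G a i) =
      ∑ a ∈ Finset.Icc 1 N, PLD Λ i a * G a j
  gt_sa : ∀ i ∈ Finset.Icc 1 N, ∀ j ∈ Finset.Icc 1 N,
    conj (∑ b ∈ Finset.Icc 1 (N - 1), G j b * PLD Λ b i) =
      ∑ b ∈ Finset.Icc 1 (N - 1), G i b * PLD Λ b j

/-- The step vector `u_c = 1_{c ≥ i+1}`, a preimage of `e_i` under `D`. -/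
def ustep (i c : ℕ) : ℂ := if i + 1 ≤ c then 1 else 0

private lemma sum_rot {s t u : Finset ℕ} (f : ℕ → ℕ → ℕ → ℂ) :
    ∑ a ∈ s, ∑ b ∈ t, ∑ c ∈ u, f a b c = ∑ c ∈ u, ∑ a ∈ s, ∑ b ∈ t, f a b c := by
  have h : ∀ a, ∑ b ∈ t, ∑ c ∈ u, f a b c = ∑ c ∈ u, ∑ b ∈ t, f a b c :=
    fun a => Finset.sum_comm
  simp_rw [h]
  exact Finset.sum_comm

lemma sum_PLD_ustep {N : ℕ} {Λ : Finset ℕ} (_hΛ : Λ ⊆ Finset.Icc 1 (N - 1))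
    {i : ℕ} (hi : i ∈ Λ) {b : ℕ} (hb : b ∈ Finset.Icc 1 (N - 1)) :
    ∑ c ∈ Finset.Icc 1 N, PLD Λ b c * ustep i c = if b = i then 1 else 0 := by
  rw [Finset.mem_Icc] at hb
  by_cases hbΛ : b ∈ Λ
  · have hsummand : ∀ c, PLD Λ b c * ustep i c =
        (if c = b + 1 then ustep i (b + 1) else 0) + (if c = b then -ustep i b else 0) := by
      intro c
      simp only [PLD, if_pos hbΛ]
      by_cases h1 : c = b + 1
      · subst h1; simp [Nat.succ_ne_self]
      · by_cases h2 : c = b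
        · subst h2; simp [h1]
        · simp [h1, h2]
    simp_rw [hsummand]
    rw [Finset.sum_add_distrib, Finset.sum_ite_eq' (Finset.Icc 1 N) (b + 1),
        Finset.sum_ite_eq' (Finset.Icc 1 N) b]
    have hb1 : b + 1 ∈ Finset.Icc 1 N := by rw [Finset.mem_Icc]; omega
    have hb0 : b ∈ Finset.Icc 1 N := by rw [Finset.mem_Icc]; omega
    rw [if_pos hb1, if_pos hb0]
    unfold ustep
    by_cases h : b = i
    · subst h
      rw [if_pos rfl, if_pos le_rfl, if_neg (by omega)]
      ring
    · rw [if_neg h]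
      by_cases hlt : i + 1 ≤ b
      · rw [if_pos (by omega), if_pos hlt]; ring
      · rw [if_neg (by omega), if_neg hlt]; ring
  · have hbi : b ≠ i := fun h => hbΛ (h ▸ hi)
    simp [PLD, hbΛ, hbi]

lemma TG_col {N : ℕ} {Λ : Finset ℕ} (hΛ : Λ ⊆ Finset.Icc 1 (N - 1))
    {G : ℕ → ℕ → ℂ} (hG : IsPseudoInv N Λ G)
    {i : ℕ} (hi : i ∈ Λ) {k : ℕ} (hk : k ∈ Finset.Icc 1 (N - 1)) :
    ∑ a ∈ Finset.Icc 1 N, PLD Λ k a * G a i = if k = i then 1 else 0 := by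
  have hiI : i ∈ Finset.Icc 1 (N - 1) := hΛ hi
  have key : ∀ a, G a i = ∑ b ∈ Finset.Icc 1 (N - 1),
      G a b * ∑ c ∈ Finset.Icc 1 N, PLD Λ b c * ustep i c := by
    intro a
    rw [Finset.sum_congr rfl (fun b hb => by rw [sum_PLD_ustep hΛ hi hb])]
    simp only [mul_ite, mul_one, mul_zero]
    rw [Finset.sum_ite_eq' (Finset.Icc 1 (N - 1)) i, if_pos hiI]
  calc ∑ a ∈ Finset.Icc 1 N, PLD Λ k a * G a i
      = ∑ a ∈ Finset.Icc 1 N, ∑ b ∈ Finset.Icc 1 (N - 1), ∑ c ∈ Finset.Icc 1 N,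
          PLD Λ k a * G a b * PLD Λ b c * ustep i c := by
        refine Finset.sum_congr rfl fun a _ => ?_
        rw [key a]
        simp only [Finset.mul_sum]
        exact Finset.sum_congr rfl fun b _ => Finset.sum_congr rfl fun c _ => by ring
    _ = ∑ c ∈ Finset.Icc 1 N, (∑ a ∈ Finset.Icc 1 N, ∑ b ∈ Finset.Icc 1 (N - 1),
          PLD Λ k a * G a b * PLD Λ b c) * ustep i c := by
        rw [sum_rot]
        refine Finset.sum_congr rfl fun c _ => ?_
        rw [Finset.sum_mul]
        exact Finset.sum_congr rfl fun a _ => by rw [Finset.sum_mul]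
    _ = ∑ c ∈ Finset.Icc 1 N, PLD Λ k c * ustep i c := by
        refine Finset.sum_congr rfl fun c hc => ?_
        rw [hG.tgt k hk c hc]
    _ = if k = i then 1 else 0 := sum_PLD_ustep hΛ hi hk

lemma col_zero {N : ℕ} {Λ : Finset ℕ} {G : ℕ → ℕ → ℂ} (hG : IsPseudoInv N Λ G)
    {j : ℕ} (hjI : j ∈ Finset.Icc 1 (N - 1)) (hj : j ∉ Λ)
    {i : ℕ} (hi : i ∈ Finset.Icc 1 N) : G i j = 0 := by
  have h0 : ∀ a ∈ Finset.Icc 1 (N - 1),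
      ∑ b ∈ Finset.Icc 1 N, PLD Λ a b * G b j = 0 := by
    intro a ha
    rw [← hG.tg_sa a ha j hjI]
    have hz : ∀ c, PLD Λ j c = 0 := fun c => by simp [PLD, hj]
    simp [hz]
  rw [← hG.gtg i hi j hjI]
  refine Finset.sum_eq_zero fun a ha => ?_
  have h2 : ∑ b ∈ Finset.Icc 1 N, G i a * PLD Λ a b * G b j
      = G i a * ∑ b ∈ Finset.Icc 1 N, PLD Λ a b * G b j := by
    rw [Finset.mul_sum]; exact Finset.sum_congr rfl fun b _ => by ring
  rw [h2, h0 a ha, mul_zero]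

private noncomputable def Wm (N : ℕ) (Λ : Finset ℕ) (G : ℕ → ℕ → ℂ) (k b : ℕ) : ℂ :=
  ∑ a ∈ Finset.Icc 1 (N - 1), G k a * PLD Λ a b

/- STATEMENT 10: the `ℓ¹ → ℓ²` norm of the pseudoinverse `(P_Λ D)†` is at most `√N`,
i.e. every column of `(P_Λ D)†` has Euclidean norm at most `√N`. -/

theorem stmt10 (N : ℕ) (Λ : Finset ℕ) (hΛ : Λ ⊆ Finset.Icc 1 (N - 1))
    (G : ℕ → ℕ → ℂ) (hG : IsPseudoInv N Λ G) :
    ∀ j ∈ Finset.Icc 1 (N - 1),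
      Real.sqrt (∑ i ∈ Finset.Icc 1 N, ‖G i j‖ ^ 2) ≤ Real.sqrt N := by
  intro j hjI
  by_cases hj : j ∈ Λ
  · -- main case
    have hTv : ∀ c ∈ Finset.Icc 1 (N - 1),
        ∑ k ∈ Finset.Icc 1 N, PLD Λ c k * (ustep j k - G k j) = 0 := by
      intro c hc
      simp_rw [mul_sub]
      rw [Finset.sum_sub_distrib, sum_PLD_ustep hΛ hj hc, TG_col hΛ hG hj hc, sub_self]
    have hWsym : ∀ k ∈ Finset.Icc 1 N, ∀ b ∈ Finset.Icc 1 N,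
        Wm N Λ G k b = conj (Wm N Λ G b k) := by
      intro k hk b hb
      exact (hG.gt_sa k hk b hb).symm
    have hrep : ∀ k ∈ Finset.Icc 1 N,
        G k j = ∑ b ∈ Finset.Icc 1 N, Wm N Λ G k b * G b j := by
      intro k hk
      rw [← hG.gtg k hk j hjI, Finset.sum_comm]
      refine Finset.sum_congr rfl fun b _ => ?_
      simp only [Wm, Finset.sum_mul]
    have hinner : ∀ b ∈ Finset.Icc 1 N,
        ∑ k ∈ Finset.Icc 1 N, (ustep j k - G k j) * Wm N Λ G b k = 0 := by
      intro b hb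
      simp only [Wm, Finset.mul_sum]
      rw [Finset.sum_comm]
      refine Finset.sum_eq_zero fun a ha => ?_
      have h2 : ∑ k ∈ Finset.Icc 1 N, (ustep j k - G k j) * (G b a * PLD Λ a k)
          = G b a * ∑ k ∈ Finset.Icc 1 N, PLD Λ a k * (ustep j k - G k j) := by
        rw [Finset.mul_sum]; exact Finset.sum_congr rfl fun k _ => by ring
      rw [h2, hTv a ha, mul_zero]
    have hO : ∑ k ∈ Finset.Icc 1 N, conj (ustep j k - G k j) * G k j = 0 := by
      calc ∑ k ∈ Finset.Icc 1 N, conj (ustep j k - G k j) * G k j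
          = ∑ k ∈ Finset.Icc 1 N, ∑ b ∈ Finset.Icc 1 N,
              conj ((ustep j k - G k j) * Wm N Λ G b k) * G b j := by
            refine Finset.sum_congr rfl fun k hk => ?_
            rw [hrep k hk, Finset.mul_sum]
            refine Finset.sum_congr rfl fun b hb => ?_
            rw [hWsym k hk b hb, map_mul]
            ring
        _ = ∑ b ∈ Finset.Icc 1 N,
              conj (∑ k ∈ Finset.Icc 1 N, (ustep j k - G k j) * Wm N Λ G b k) * G b j := by
            rw [Finset.sum_comm]
            refine Finset.sum_congr rfl fun b _ => ?_
            rw [map_sum, Finset.sum_mul]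
        _ = 0 := by
            refine Finset.sum_eq_zero fun b hb => ?_
            rw [hinner b hb, map_zero, zero_mul]
    -- cross terms vanish, Pythagoras
    have hcross : ∑ k ∈ Finset.Icc 1 N, (G k j * conj (ustep j k - G k j)).re = 0 := by
      rw [← Complex.re_sum]
      have : ∑ k ∈ Finset.Icc 1 N, G k j * conj (ustep j k - G k j)
          = ∑ k ∈ Finset.Icc 1 N, conj (ustep j k - G k j) * G k j :=
        Finset.sum_congr rfl fun k _ => mul_comm _ _
      rw [this, hO, Complex.zero_re]
    have hsum : ∑ k ∈ Finset.Icc 1 N, Complex.normSq (ustep j k)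
        = ∑ k ∈ Finset.Icc 1 N, Complex.normSq (G k j)
          + ∑ k ∈ Finset.Icc 1 N, Complex.normSq (ustep j k - G k j) := by
      have hdecomp : ∀ k, Complex.normSq (ustep j k)
          = Complex.normSq (G k j) + Complex.normSq (ustep j k - G k j)
            + 2 * (G k j * conj (ustep j k - G k j)).re := by
        intro k
        have : ustep j k = G k j + (ustep j k - G k j) := by ring
        rw [this, Complex.normSq_add]
        ring_nf
      simp_rw [hdecomp]
      rw [Finset.sum_add_distrib, Finset.sum_add_distrib, ← Finset.mul_sum, hcross]
      ring
    have hstep : ∑ k ∈ Finset.Icc 1 N, Complex.normSq (ustep j k) ≤ (N : ℝ) := by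
      have h1 : ∀ k ∈ Finset.Icc 1 N, Complex.normSq (ustep j k) ≤ 1 := by
        intro k _
        unfold ustep
        split_ifs <;> simp
      calc ∑ k ∈ Finset.Icc 1 N, Complex.normSq (ustep j k)
          ≤ ∑ _k ∈ Finset.Icc 1 N, (1 : ℝ) := Finset.sum_le_sum h1
        _ = (N : ℝ) := by simp [Nat.card_Icc]
    have hB : 0 ≤ ∑ k ∈ Finset.Icc 1 N, Complex.normSq (ustep j k - G k j) :=
      Finset.sum_nonneg fun k _ => Complex.normSq_nonneg _
    have hfinal : ∑ i ∈ Finset.Icc 1 N, ‖G i j‖ ^ 2 ≤ (N : ℝ) := by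
      simp_rw [Complex.sq_norm]
      linarith
    exact Real.sqrt_le_sqrt hfinal
  · -- zero column
    have hz : ∑ i ∈ Finset.Icc 1 N, ‖G i j‖ ^ 2 = 0 :=
      Finset.sum_eq_zero fun i hi => by rw [col_zero hG hjI hj hi]; simp
    rw [hz, Real.sqrt_zero]
    exact Real.sqrt_nonneg _
end
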